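/- For every a ∈ 𝐚, the internal direct sum A_a⁻ ⊕ A_a⁺ equals the sum of subspaces S_a + T_a. -/

import Mathlib

open MeasureTheory Set Filter

noncomputable section

namespace KnotWavelet

/-- The space `L²(J)` for `J ⊆ ℝ`. -/
abbrev L2S (J : Set ℝ) := Lp ℝ 2 (volume.restrict J)

/-- `f ∈ L²(J)` is supported (a.e.) in `I`. -/
def SuppIn (J : Set ℝ) (f : L2S J) (I : Set ℝ) : Prop :=
  ∀ᵐ x ∂(volume.restrict J), x ∉ I → f x = 0

/-- `G_I`, the members of `G` supported in `I`. -/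
def suppSet (J : Set ℝ) (G : Set (L2S J)) (I : Set ℝ) : Set (L2S J) :=
  {g ∈ G | SuppIn J g I}

/-- For a subspace `V`, the subspace of members supported in `I`. -/
def suppSub (J : Set ℝ) (V : Submodule ℝ (L2S J)) (I : Set ℝ) : Submodule ℝ (L2S J) where
  carrier := {f | f ∈ V ∧ SuppIn J f I}
  zero_mem' := ⟨V.zero_mem, by
    filter_upwards [Lp.coeFn_zero ℝ 2 (volume.restrict J)] with x hx _
    simpa using hx⟩
  add_mem' := by
    rintro f g ⟨hfV, hf⟩ ⟨hgV, hg⟩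
    refine ⟨V.add_mem hfV hgV, ?_⟩
    filter_upwards [Lp.coeFn_add f g, hf, hg] with x hx h1 h2 hxI
    rw [hx]
    simp [Pi.add_apply, h1 hxI, h2 hxI]
  smul_mem' := by
    rintro c f ⟨hfV, hf⟩
    refine ⟨V.smul_mem c hfV, ?_⟩
    filter_upwards [Lp.coeFn_smul c f, hf] with x hx h1 hxI
    rw [hx]
    simp [h1 hxI]

/-- The successor `a₊` of `a` in `ks`, as an extended real (`+∞` if there is none). -/
def succE (ks : Set ℝ) (a : ℝ) : EReal := sInf ((fun x : ℝ => (x : EReal)) '' {b ∈ ks | a < b})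

/-- The predecessor `a₋` of `a` in `ks`, as an extended real (`−∞` if there is none). -/
def predE (ks : Set ℝ) (a : ℝ) : EReal := sSup ((fun x : ℝ => (x : EReal)) '' {b ∈ ks | b < a})

/-- The successor `a₊` of `a` in `ks` as a real number (junk value if there is none). -/
def succR (ks : Set ℝ) (a : ℝ) : ℝ := sInf {b ∈ ks | a < b}

/-- The interval `[a, a₊]`. -/
def IccS (ks : Set ℝ) (a : ℝ) : Set ℝ := {x | a ≤ x ∧ (x : EReal) ≤ succE ks a}

/-- The interval `[a₋, a₊]`. -/
def IccPS (ks : Set ℝ) (a : ℝ) : Set ℝ :=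
  {x | predE ks a ≤ (x : EReal) ∧ (x : EReal) ≤ succE ks a}

/-- The interval `[a₋, a]`. -/
def IccP (ks : Set ℝ) (a : ℝ) : Set ℝ := {x | predE ks a ≤ (x : EReal) ∧ x ≤ a}

/-- The interval `(a, a₊)`. -/
def IooS (ks : Set ℝ) (a : ℝ) : Set ℝ := {x | a < x ∧ (x : EReal) < succE ks a}

/-- The interval `[a₊, ∞)` (empty if `a₊ = +∞`). -/
def IciS (ks : Set ℝ) (a : ℝ) : Set ℝ := {x | succE ks a ≤ (x : EReal)}

/-- `ks` is a knot sequence in the interval `J`: it is a subset of `J` with at least three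
elements, has no cluster (accumulation) point in `J`, and `inf ks = inf J`, `sup ks = sup J`
(as extended reals). -/
structure IsKnotSeq (J ks : Set ℝ) : Prop where
  subset : ks ⊆ J
  nontrivial : ∃ x y z : ℝ, x ∈ ks ∧ y ∈ ks ∧ z ∈ ks ∧ x ≠ y ∧ x ≠ z ∧ y ≠ z
  noCluster : ∀ x ∈ J, ¬ AccPt x (Filter.principal ks)
  inf_eq : sInf ((fun x : ℝ => (x : EReal)) '' ks) = sInf ((fun x : ℝ => (x : EReal)) '' J)
  sup_eq : sSup ((fun x : ℝ => (x : EReal)) '' ks) = sSup ((fun x : ℝ => (x : EReal)) '' J)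

/-- `a'` is the successor of `a` in `ks`. -/
def IsSucc (ks : Set ℝ) (a a' : ℝ) : Prop :=
  a ∈ ks ∧ a' ∈ ks ∧ a < a' ∧ ∀ b ∈ ks, b ≤ a ∨ a' ≤ b

/-- A collection `Φ ⊆ L²(J)` is locally finite: on each compact interval `K ⊆ J` all but
finitely many members of `Φ` vanish (a.e.) on `K`. -/
def LocFin (J : Set ℝ) (Φ : Set (L2S J)) : Prop :=
  ∀ K : Set ℝ, IsCompact K → K ⊆ J →
    {φ ∈ Φ | ¬ ∀ᵐ x ∂(volume.restrict J), x ∈ K → φ x = 0}.Finite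

/-- `Φ̆_a := Φ_{[a,a₊]}`. -/
def breveAt (J : Set ℝ) (ks : Set ℝ) (Φ : Set (L2S J)) (a : ℝ) : Set (L2S J) :=
  suppSet J Φ (IccS ks a)

open Classical in
/-- `Φ̆_{a₋}` (the empty set if `a` has no predecessor). -/
def brevePred (J : Set ℝ) (ks : Set ℝ) (Φ : Set (L2S J)) (a : ℝ) : Set (L2S J) :=
  if {b ∈ ks | b < a}.Nonempty then suppSet J Φ (IccP ks a) else ∅

/-- `Φ_a := Φ_{[a₋,a₊]} \ Φ̆_{a₋}`. -/
def midAt (J : Set ℝ) (ks : Set ℝ) (Φ : Set (L2S J)) (a : ℝ) : Set (L2S J) :=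
  suppSet J Φ (IccPS ks a) \ brevePred J ks Φ a

/-- `Φ̄_a := Φ_a \ Φ̆_a`. -/
def barAt (J : Set ℝ) (ks : Set ℝ) (Φ : Set (L2S J)) (a : ℝ) : Set (L2S J) :=
  midAt J ks Φ a \ breveAt J ks Φ a

open Classical in
/-- `Φ̄_{a₊}` (the empty set if `a` has no successor). -/
def barSucc (J : Set ℝ) (ks : Set ℝ) (Φ : Set (L2S J)) (a : ℝ) : Set (L2S J) :=
  if {b ∈ ks | a < b}.Nonempty then barAt J ks Φ (succR ks a) else ∅

open Classical in
/-- Multiplication by the characteristic function of `I` (restriction to `I`). -/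
def indL2 (J : Set ℝ) (I : Set ℝ) (f : L2S J) : L2S J :=
  if h : MeasurableSet I then ((Lp.memLp f).indicator h).toLp (I.indicator f) else 0

/-- `Φ` is a basis centered on the knot sequence `ks`. -/
def CenteredBasis (J ks : Set ℝ) (Φ : Set (L2S J)) : Prop :=
  LocFin J Φ ∧
  Φ = ⋃ a ∈ ks, midAt J ks Φ a ∧
  ∀ a ∈ ks, LinearIndependent ℝ
    (fun φ : ↥(midAt J ks Φ a ∪ barSucc J ks Φ a) => indL2 J (IccS ks a) (φ : L2S J))

/-- `S(Φ)`: the `L²`-closure of the span of `Φ`. -/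
def SClos (J : Set ℝ) (Φ : Set (L2S J)) : Submodule ℝ (L2S J) :=
  (Submodule.span ℝ Φ).topologicalClosure

/-- An orthogonal basis centered on `ks`. -/
def OrthoCenteredBasis (J ks : Set ℝ) (Φ : Set (L2S J)) : Prop :=
  CenteredBasis J ks Φ ∧ Φ.Pairwise fun f g => (inner ℝ f g : ℝ) = 0

/-- The orthogonal projection onto the closure of a subspace, as a linear map. -/
def projL {H : Type*} [NormedAddCommGroup H] [InnerProductSpace ℝ H] [CompleteSpace H]
    (K : Submodule ℝ H) : H →ₗ[ℝ] H :=
  K.topologicalClosure.subtype ∘ₗ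
    (K.topologicalClosure.orthogonalProjectionOnto : H →L[ℝ] K.topologicalClosure).toLinearMap

/-- The image `P_K U` of a subspace `U` under the orthogonal projection onto (the closure of)
`K`. -/
def projSub {H : Type*} [NormedAddCommGroup H] [InnerProductSpace ℝ H] [CompleteSpace H]
    (K U : Submodule ℝ H) : Submodule ℝ H :=
  U.map (projL K)

/-- The image `(I − P_K) U`. -/
def oneSubProjSub {H : Type*} [NormedAddCommGroup H] [InnerProductSpace ℝ H] [CompleteSpace H]
    (K U : Submodule ℝ H) : Submodule ℝ H :=
  U.map (LinearMap.id - projL K)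

/-- Two subspaces are orthogonal. -/
def PerpSub {H : Type*} [NormedAddCommGroup H] [InnerProductSpace ℝ H]
    (U V : Submodule ℝ H) : Prop :=
  ∀ f ∈ U, ∀ g ∈ V, (inner ℝ f g : ℝ) = 0

end KnotWavelet

namespace KnotWavelet

variable (J ks : Set ℝ)

open Classical in
/-- Multiplication by the characteristic function of `I`, as a linear map. -/
def indLM (I : Set ℝ) : L2S J →ₗ[ℝ] L2S J where
  toFun := indL2 J I
  map_add' f g := by
    unfold indL2
    split_ifs with h
    · have hf := (Lp.memLp f).indicator h
      have hg := (Lp.memLp g).indicator h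
      calc ((Lp.memLp (f + g)).indicator h).toLp (I.indicator ⇑(f + g))
          = (hf.add hg).toLp (I.indicator ⇑f + I.indicator ⇑g) := by
            refine MemLp.toLp_congr _ _ ?_
            filter_upwards [Lp.coeFn_add f g] with x hx
            by_cases hxI : x ∈ I
            · rw [Pi.add_apply, Set.indicator_of_mem hxI, Set.indicator_of_mem hxI,
                Set.indicator_of_mem hxI]
              exact hx
            · rw [Pi.add_apply, Set.indicator_of_notMem hxI, Set.indicator_of_notMem hxI,
                Set.indicator_of_notMem hxI, add_zero]
        _ = hf.toLp (I.indicator ⇑f) + hg.toLp (I.indicator ⇑g) := MemLp.toLp_add hf hg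
    · simp
  map_smul' c f := by
    unfold indL2
    split_ifs with h
    · have hf := (Lp.memLp f).indicator h
      calc ((Lp.memLp (c • f)).indicator h).toLp (I.indicator ⇑(c • f))
          = (hf.const_smul c).toLp (c • I.indicator ⇑f) := by
            refine MemLp.toLp_congr _ _ ?_
            filter_upwards [Lp.coeFn_smul c f] with x hx
            by_cases hxI : x ∈ I
            · rw [Pi.smul_apply, Set.indicator_of_mem hxI, Set.indicator_of_mem hxI]
              exact hx
            · rw [Pi.smul_apply, Set.indicator_of_notMem hxI, Set.indicator_of_notMem hxI,
                smul_zero]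
        _ = c • hf.toLp (I.indicator ⇑f) := MemLp.toLp_const_smul c hf
    · simp

/-- The image `χ_I · U` of a subspace under multiplication by the characteristic function of
`I`. -/
def chiMul (I : Set ℝ) (U : Submodule ℝ (L2S J)) : Submodule ℝ (L2S J) :=
  U.map (indLM J I)

/-- `V_a`, the subspace of members of `V` supported in `[a₋, a₊]`. -/
def Vmid (V : Submodule ℝ (L2S J)) (a : ℝ) : Submodule ℝ (L2S J) :=
  suppSub J V (IccPS ks a)

/-- `V̆_a`, the subspace of members of `V` supported in `[a, a₊]`. -/
def Vbreve (V : Submodule ℝ (L2S J)) (a : ℝ) : Submodule ℝ (L2S J) :=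
  suppSub J V (IccS ks a)

open Classical in
/-- `V̆_{a₋}` (the zero subspace if `a` has no predecessor in `ks`). -/
def VbrevePred (V : Submodule ℝ (L2S J)) (a : ℝ) : Submodule ℝ (L2S J) :=
  if {b ∈ ks | b < a}.Nonempty then suppSub J V (IccP ks a) else ⊥

/-- `V̄_a := (I − P_{V̆_{a₋} ⊕ V̆_a}) V_a`. -/
def Vbar (V : Submodule ℝ (L2S J)) (a : ℝ) : Submodule ℝ (L2S J) :=
  oneSubProjSub (VbrevePred J ks V a ⊔ Vbreve J ks V a) (Vmid J ks V a)

/-- `A_a⁺ := P_{V̆¹_a} V̄⁰_a`. -/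
def Aplus (V₀ V₁ : Submodule ℝ (L2S J)) (a : ℝ) : Submodule ℝ (L2S J) :=
  projSub (Vbreve J ks V₁ a) (Vbar J ks V₀ a)

/-- `A_a⁻ := P_{V̆¹_{a₋}} V̄⁰_a`. -/
def Aminus (V₀ V₁ : Submodule ℝ (L2S J)) (a : ℝ) : Submodule ℝ (L2S J) :=
  projSub (VbrevePred J ks V₁ a) (Vbar J ks V₀ a)

/-- The wavelet space `W := V¹ ⊖ V⁰`, the orthogonal complement of `V⁰` in `V¹`. -/
def Wsp (V₀ V₁ : Submodule ℝ (L2S J)) : Submodule ℝ (L2S J) :=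
  V₁ ⊓ V₀ᗮ

/-- `W̄_a := W_a ⊖ (W̆_{a₋} ⊕ W̆_a)`. -/
def Wbar (V₀ V₁ : Submodule ℝ (L2S J)) (a : ℝ) : Submodule ℝ (L2S J) :=
  Vmid J ks (Wsp J V₀ V₁) a ⊓
    (VbrevePred J ks (Wsp J V₀ V₁) a ⊔ Vbreve J ks (Wsp J V₀ V₁) a)ᗮ

/-- `Y_a := V̄⁰_a ∩ V̄¹_a`. -/
def Ysp (V₀ V₁ : Submodule ℝ (L2S J)) (a : ℝ) : Submodule ℝ (L2S J) :=
  Vbar J ks V₀ a ⊓ Vbar J ks V₁ a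

/-- `Y_a⁺ := (χ_{[a,a₊]}·V̄⁰_a) ∩ (χ_{[a,a₊]}·V̄¹_a)`. -/
def Yplus (V₀ V₁ : Submodule ℝ (L2S J)) (a : ℝ) : Submodule ℝ (L2S J) :=
  chiMul J (IccS ks a) (Vbar J ks V₀ a) ⊓ chiMul J (IccS ks a) (Vbar J ks V₁ a)

/-- `Y_a⁻ := (χ_{[a₋,a]}·V̄⁰_a) ∩ (χ_{[a₋,a]}·V̄¹_a)`. -/
def Yminus (V₀ V₁ : Submodule ℝ (L2S J)) (a : ℝ) : Submodule ℝ (L2S J) :=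
  chiMul J (IccP ks a) (Vbar J ks V₀ a) ⊓ chiMul J (IccP ks a) (Vbar J ks V₁ a)

/-- `X_a⁺ := (χ_{[a,a₊]}·V̄⁰_a) ⊖ Y_a⁺`. -/
def Xplus (V₀ V₁ : Submodule ℝ (L2S J)) (a : ℝ) : Submodule ℝ (L2S J) :=
  chiMul J (IccS ks a) (Vbar J ks V₀ a) ⊓ (Yplus J ks V₀ V₁ a)ᗮ

/-- `X_a⁻ := (χ_{[a₋,a]}·V̄⁰_a) ⊖ Y_a⁻`. -/
def Xminus (V₀ V₁ : Submodule ℝ (L2S J)) (a : ℝ) : Submodule ℝ (L2S J) :=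
  chiMul J (IccP ks a) (Vbar J ks V₀ a) ⊓ (Yminus J ks V₀ V₁ a)ᗮ

/-- `T_a := (I − P_{V̄¹_a}) V̄⁰_a`. -/
def Tsp (V₀ V₁ : Submodule ℝ (L2S J)) (a : ℝ) : Submodule ℝ (L2S J) :=
  oneSubProjSub (Vbar J ks V₁ a) (Vbar J ks V₀ a)

/-- `T_a⁻ := {f ∈ T_a : supp f ⊆ [a₋,a]}`. -/
def Tminus (V₀ V₁ : Submodule ℝ (L2S J)) (a : ℝ) : Submodule ℝ (L2S J) :=
  suppSub J (Tsp J ks V₀ V₁ a) (IccP ks a)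

/-- `T_a⁺ := {f ∈ T_a : supp f ⊆ [a,a₊]}`. -/
def Tplus (V₀ V₁ : Submodule ℝ (L2S J)) (a : ℝ) : Submodule ℝ (L2S J) :=
  suppSub J (Tsp J ks V₀ V₁ a) (IccS ks a)

/-- `U_a := T_a ⊖ (T_a⁻ ⊕ T_a⁺)`. -/
def Usp (V₀ V₁ : Submodule ℝ (L2S J)) (a : ℝ) : Submodule ℝ (L2S J) :=
  Tsp J ks V₀ V₁ a ⊓ (Tminus J ks V₀ V₁ a ⊔ Tplus J ks V₀ V₁ a)ᗮ

/-- `S_a := (χ_{[a,a₊]} − χ_{[a₋,a]})·U_a`. -/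
def Ssp (V₀ V₁ : Submodule ℝ (L2S J)) (a : ℝ) : Submodule ℝ (L2S J) :=
  (Usp J ks V₀ V₁ a).map (indLM J (IccS ks a) - indLM J (IccP ks a))

/-- `Ŵ_a := (I − P_{V̄⁰_a}) V̄¹_a`. -/
def What (V₀ V₁ : Submodule ℝ (L2S J)) (a : ℝ) : Submodule ℝ (L2S J) :=
  oneSubProjSub (Vbar J ks V₀ a) (Vbar J ks V₁ a)

/-- `W̃_a := W̄_a ⊖ Ŵ_a`. -/
def Wtilde (V₀ V₁ : Submodule ℝ (L2S J)) (a : ℝ) : Submodule ℝ (L2S J) :=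
  Wbar J ks V₀ V₁ a ⊓ (What J ks V₀ V₁ a)ᗮ

end KnotWavelet
namespace KnotWavelet

set_option synthInstance.maxHeartbeats 1000000 in
lemma t1space_aux (J : Set ℝ) : T1Space (L2S J) := inferInstance

set_option synthInstance.maxHeartbeats 1000000 in
lemma t2space_aux (J : Set ℝ) : T2Space (L2S J) := inferInstance

attribute [local instance] t1space_aux t2space_aux

variable {J : Set ℝ}

/-! ### Basic support lemmas -/

lemma suppIn_mono {f : L2S J} {I I' : Set ℝ} (hII : I ⊆ I') (h : SuppIn J f I) :
    SuppIn J f I' := by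
  filter_upwards [h] with x hx hxI'
  exact hx fun hxI => hxI' (hII hxI)

lemma indL2_coeFn {I : Set ℝ} (hI : MeasurableSet I) (f : L2S J) :
    (indL2 J I f : L2S J) =ᵐ[volume.restrict J] I.indicator f := by
  unfold indL2; rw [dif_pos hI]; exact MemLp.coeFn_toLp _

lemma norm_indL2_le (I : Set ℝ) (f : L2S J) : ‖indL2 J I f‖ ≤ ‖f‖ := by
  unfold indL2
  split_ifs with h
  · rw [Lp.norm_toLp, Lp.norm_def]
    exact ENNReal.toReal_mono (Lp.eLpNorm_lt_top f).ne (eLpNorm_indicator_le _)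
  · simp

lemma indL2_eq_zero_iff {I : Set ℝ} (hI : MeasurableSet I) (f : L2S J) :
    indL2 J I f = 0 ↔ ∀ᵐ x ∂(volume.restrict J), x ∈ I → f x = 0 := by
  rw [Lp.eq_zero_iff_ae_eq_zero]
  constructor
  · intro h
    filter_upwards [h, indL2_coeFn hI f] with x h1 h2 hxI
    rw [← Set.indicator_of_mem hxI (f : ℝ → ℝ), ← h2, h1, Pi.zero_apply]
  · intro h
    filter_upwards [h, indL2_coeFn hI f] with x h1 h2
    rw [h2, Pi.zero_apply]
    by_cases hxI : x ∈ I
    · rw [Set.indicator_of_mem hxI, h1 hxI]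
    · rw [Set.indicator_of_notMem hxI]

lemma suppIn_iff_indL2_compl {I : Set ℝ} (hI : MeasurableSet I) (f : L2S J) :
    SuppIn J f I ↔ indL2 J Iᶜ f = 0 := by
  rw [indL2_eq_zero_iff hI.compl]
  exact eventually_congr (Eventually.of_forall fun x => by simp [Set.mem_compl_iff])

/-- The closed submodule of all of `L²(J)` supported in `I`. -/
def suppFull (J : Set ℝ) (I : Set ℝ) : Submodule ℝ (L2S J) := suppSub J ⊤ I

lemma mem_suppFull {I : Set ℝ} {f : L2S J} : f ∈ suppFull J I ↔ SuppIn J f I :=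
  ⟨fun h => h.2, fun h => ⟨trivial, h⟩⟩

lemma suppFull_mono {I I' : Set ℝ} (h : I ⊆ I') : suppFull J I ≤ suppFull J I' :=
  fun _ hf => mem_suppFull.2 (suppIn_mono h (mem_suppFull.1 hf))

lemma isClosed_suppFull {I : Set ℝ} (hI : MeasurableSet I) :
    IsClosed ((suppFull J I : Set (L2S J))) := by
  have hc : Continuous (fun f : L2S J => indL2 J Iᶜ f) :=
    AddMonoidHomClass.continuous_of_bound (indLM J Iᶜ) 1
      (fun f => by rw [one_mul]; exact norm_indL2_le Iᶜ f)
  have hset : ((suppFull J I : Set (L2S J))) = (fun f : L2S J => indL2 J Iᶜ f) ⁻¹' {0} := by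
    ext f
    simp only [SetLike.mem_coe, Set.mem_preimage, Set.mem_singleton_iff]
    rw [mem_suppFull, suppIn_iff_indL2_compl hI]
  rw [hset]
  exact isClosed_singleton.preimage hc

lemma suppSub_eq_inf (V : Submodule ℝ (L2S J)) (I : Set ℝ) :
    suppSub J V I = V ⊓ suppFull J I := by
  ext f
  simp [suppSub, suppFull, Submodule.mem_inf]

end KnotWavelet
namespace KnotWavelet

variable {J ks : Set ℝ} {a : ℝ}

/-! ### Interval lemmas -/

lemma predE_le_coe (ks : Set ℝ) (a : ℝ) : predE ks a ≤ (a : EReal) := by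
  refine sSup_le ?_
  rintro x ⟨b, ⟨_, hba⟩, rfl⟩
  show (b : EReal) ≤ (a : EReal)
  exact_mod_cast hba.le

lemma coe_le_succE (ks : Set ℝ) (a : ℝ) : (a : EReal) ≤ succE ks a := by
  refine le_sInf ?_
  rintro x ⟨b, ⟨_, hab⟩, rfl⟩
  show (a : EReal) ≤ (b : EReal)
  exact_mod_cast hab.le

lemma IccP_subset_IccPS : IccP ks a ⊆ IccPS ks a := fun x hx =>
  ⟨hx.1, le_trans (by exact_mod_cast hx.2) (coe_le_succE ks a)⟩

lemma IccS_subset_IccPS : IccS ks a ⊆ IccPS ks a := fun x hx =>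
  ⟨le_trans (predE_le_coe ks a) (by exact_mod_cast hx.1), hx.2⟩

lemma IccP_union_IccS : IccP ks a ∪ IccS ks a = IccPS ks a := by
  apply Set.Subset.antisymm (Set.union_subset IccP_subset_IccPS IccS_subset_IccPS)
  intro x hx
  rcases le_total x a with h | h
  · exact Or.inl ⟨hx.1, h⟩
  · exact Or.inr ⟨h, hx.2⟩

lemma IccP_inter_IccS : IccP ks a ∩ IccS ks a ⊆ {a} := by
  rintro x ⟨h1, h2⟩
  exact le_antisymm h1.2 h2.1

lemma measurableSet_IccP (ks : Set ℝ) (a : ℝ) : MeasurableSet (IccP ks a) := by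
  have : IccP ks a =
      ((fun x : ℝ => (x : EReal)) ⁻¹' Set.Ici (predE ks a)) ∩ Set.Iic a := rfl
  rw [this]
  exact ((continuous_coe_real_ereal.measurable measurableSet_Ici)).inter measurableSet_Iic

lemma measurableSet_IccS (ks : Set ℝ) (a : ℝ) : MeasurableSet (IccS ks a) := by
  have : IccS ks a =
      Set.Ici a ∩ ((fun x : ℝ => (x : EReal)) ⁻¹' Set.Iic (succE ks a)) := rfl
  rw [this]
  exact measurableSet_Ici.inter (continuous_coe_real_ereal.measurable measurableSet_Iic)

lemma measurableSet_IccPS (ks : Set ℝ) (a : ℝ) : MeasurableSet (IccPS ks a) := by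
  rw [← IccP_union_IccS]
  exact (measurableSet_IccP ks a).union (measurableSet_IccS ks a)

/-! ### a.e. lemmas -/

lemma ae_ne_pt (J : Set ℝ) (a : ℝ) : ∀ᵐ x ∂(volume.restrict J), x ≠ a := by
  have h0 : (volume.restrict J) {a} = 0 :=
    le_antisymm (le_trans (Measure.restrict_le_self _) (by simp)) zero_le
  rw [ae_iff]
  simpa using h0

lemma not_mem_both (J : Set ℝ) (ks : Set ℝ) (a : ℝ) :
    ∀ᵐ x ∂(volume.restrict J), ¬(x ∈ IccP ks a ∧ x ∈ IccS ks a) := by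
  filter_upwards [ae_ne_pt J a] with x hx h
  exact hx (IccP_inter_IccS ⟨h.1, h.2⟩)

lemma inner_eq_zero_of_suppIn {f g : L2S J} {I I' : Set ℝ}
    (hf : SuppIn J f I) (hg : SuppIn J g I')
    (hII' : ∀ᵐ x ∂(volume.restrict J), ¬(x ∈ I ∧ x ∈ I')) :
    (inner ℝ f g : ℝ) = 0 := by
  rw [MeasureTheory.L2.inner_def]
  have h : (fun x => (inner ℝ (f x) (g x) : ℝ)) =ᵐ[volume.restrict J] 0 := by
    filter_upwards [hf, hg, hII'] with x hfx hgx hx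
    rcases not_and_or.mp hx with h | h
    · simp [hfx h]
    · simp [hgx h]
  rw [integral_congr_ae h]
  simp

/-! ### indL2 action on supported functions -/

lemma suppIn_indL2 {I : Set ℝ} (hI : MeasurableSet I) (f : L2S J) :
    SuppIn J (indL2 J I f) I := by
  filter_upwards [indL2_coeFn hI f] with x hx hxI
  rw [hx, Set.indicator_of_notMem hxI]

lemma indL2_of_suppIn {I : Set ℝ} (hI : MeasurableSet I) {f : L2S J}
    (hf : SuppIn J f I) : indL2 J I f = f := by
  apply Lp.ext
  filter_upwards [indL2_coeFn hI f, hf] with x hx hfx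
  rw [hx]
  by_cases hxI : x ∈ I
  · rw [Set.indicator_of_mem hxI]
  · rw [Set.indicator_of_notMem hxI, hfx hxI]

lemma indL2_eq_zero_of_suppIn {I I' : Set ℝ} (hI : MeasurableSet I) {f : L2S J}
    (hf : SuppIn J f I')
    (hII' : ∀ᵐ x ∂(volume.restrict J), ¬(x ∈ I ∧ x ∈ I')) : indL2 J I f = 0 := by
  rw [indL2_eq_zero_iff hI]
  filter_upwards [hf, hII'] with x hfx hx hxI
  exact hfx fun hxI' => hx ⟨hxI, hxI'⟩

lemma indL2_add_indL2_of_suppIn {f : L2S J}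
    (hf : SuppIn J f (IccPS ks a)) :
    indL2 J (IccP ks a) f + indL2 J (IccS ks a) f = f := by
  apply Lp.ext
  filter_upwards [Lp.coeFn_add (indL2 J (IccP ks a) f) (indL2 J (IccS ks a) f),
    indL2_coeFn (measurableSet_IccP ks a) f, indL2_coeFn (measurableSet_IccS ks a) f,
    hf, ae_ne_pt J a] with x hadd h1 h2 hfx hxa
  rw [hadd, Pi.add_apply, h1, h2]
  by_cases hP : x ∈ IccP ks a
  · have hS : x ∉ IccS ks a := fun hS => hxa (IccP_inter_IccS ⟨hP, hS⟩)
    rw [Set.indicator_of_mem hP, Set.indicator_of_notMem hS, add_zero]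
  · by_cases hS : x ∈ IccS ks a
    · rw [Set.indicator_of_mem hS, Set.indicator_of_notMem hP, zero_add]
    · rw [Set.indicator_of_notMem hP, Set.indicator_of_notMem hS, add_zero,
        hfx fun h => (by rw [← IccP_union_IccS] at h; exact h.elim hP hS)]

end KnotWavelet
namespace KnotWavelet

section Hilbert

variable {H : Type*} [NormedAddCommGroup H] [InnerProductSpace ℝ H] [CompleteSpace H]

lemma projL_mem (K : Submodule ℝ H) (f : H) : projL K f ∈ K.topologicalClosure :=
  SetLike.coe_mem _

lemma orthogonal_closure (K : Submodule ℝ H) : K.topologicalClosureᗮ = Kᗮ := by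
  rw [← Submodule.orthogonal_orthogonal_eq_closure]
  exact le_antisymm (Submodule.orthogonal_le (Submodule.le_orthogonal_orthogonal K))
    (Submodule.le_orthogonal_orthogonal Kᗮ)

lemma sub_projL_mem_orthogonal (K : Submodule ℝ H) (f : H) : f - projL K f ∈ Kᗮ := by
  rw [← orthogonal_closure]
  exact K.topologicalClosure.sub_starProjection_mem_orthogonal f

lemma projL_eq_of_mem_of_orthogonal {K : Submodule ℝ H} {f u : H}
    (hu : u ∈ K.topologicalClosure) (h : f - u ∈ Kᗮ) : projL K f = u := by
  refine K.topologicalClosure.eq_starProjection_of_mem_of_inner_eq_zero hu fun w hw => ?_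
  rw [← orthogonal_closure] at h
  exact real_inner_comm w (f - u) ▸ (Submodule.mem_orthogonal _ _).1 h w hw

lemma projL_eq_self {K : Submodule ℝ H} {f : H} (hf : f ∈ K.topologicalClosure) :
    projL K f = f :=
  projL_eq_of_mem_of_orthogonal hf (by simp)

lemma projL_eq_zero {K : Submodule ℝ H} {f : H} (hf : f ∈ Kᗮ) : projL K f = 0 :=
  projL_eq_of_mem_of_orthogonal (zero_mem _) (by simpa)

lemma mem_orthogonal_sup {K₁ K₂ : Submodule ℝ H} {x : H}
    (h₁ : x ∈ K₁ᗮ) (h₂ : x ∈ K₂ᗮ) : x ∈ (K₁ ⊔ K₂)ᗮ := by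
  rw [← Submodule.inf_orthogonal]
  exact ⟨h₁, h₂⟩

/-- Splitting of orthogonal projection onto the sup of two orthogonal closed subspaces. -/
lemma projL_sup_eq {K₁ K₂ : Submodule ℝ H}
    (h₁ : IsClosed (K₁ : Set H)) (h₂ : IsClosed (K₂ : Set H))
    (hperp : ∀ f ∈ K₁, ∀ g ∈ K₂, (inner ℝ f g : ℝ) = 0) (f : H) :
    projL (K₁ ⊔ K₂) f = projL K₁ f + projL K₂ f := by
  have hm₁ : projL K₁ f ∈ K₁ := by
    have := projL_mem K₁ f
    rwa [h₁.submodule_topologicalClosure_eq] at this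
  have hm₂ : projL K₂ f ∈ K₂ := by
    have := projL_mem K₂ f
    rwa [h₂.submodule_topologicalClosure_eq] at this
  apply projL_eq_of_mem_of_orthogonal
  · exact Submodule.le_topologicalClosure _
      (Submodule.add_mem _ (Submodule.mem_sup_left hm₁) (Submodule.mem_sup_right hm₂))
  · apply mem_orthogonal_sup
    · rw [Submodule.mem_orthogonal]
      intro w hw
      have h1 : (inner ℝ w (f - projL K₁ f) : ℝ) = 0 :=
        (Submodule.mem_orthogonal _ _).1 (sub_projL_mem_orthogonal K₁ f) w hw
      have h2 : (inner ℝ w (projL K₂ f) : ℝ) = 0 := hperp w hw _ hm₂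
      have : f - (projL K₁ f + projL K₂ f) = (f - projL K₁ f) - projL K₂ f := by abel
      rw [this, inner_sub_right, h1, h2, sub_zero]
    · rw [Submodule.mem_orthogonal]
      intro w hw
      have h1 : (inner ℝ w (f - projL K₂ f) : ℝ) = 0 :=
        (Submodule.mem_orthogonal _ _).1 (sub_projL_mem_orthogonal K₂ f) w hw
      have h2 : (inner ℝ w (projL K₁ f) : ℝ) = 0 :=
        real_inner_comm _ w ▸ hperp _ hm₁ w hw
      have : f - (projL K₁ f + projL K₂ f) = (f - projL K₂ f) - projL K₁ f := by abel
      rw [this, inner_sub_right, h1, h2, sub_zero]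

lemma mem_orthogonal_of_inner_right {K : Submodule ℝ H} {x : H}
    (h : ∀ g ∈ K, (inner ℝ x g : ℝ) = 0) : x ∈ Kᗮ := by
  rw [Submodule.mem_orthogonal]
  intro w hw
  rw [real_inner_comm]
  exact h w hw

end Hilbert

end KnotWavelet
namespace KnotWavelet

variable {J ks : Set ℝ} {a : ℝ}

lemma mem_suppSub {V : Submodule ℝ (L2S J)} {I : Set ℝ} {f : L2S J} :
    f ∈ suppSub J V I ↔ f ∈ V ∧ SuppIn J f I := Iff.rfl

/-! ### Knot sequence facts -/

lemma succ_attained (hJ : J.OrdConnected) (hks : IsKnotSeq J ks) (ha : a ∈ ks)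
    (hne : {b ∈ ks | a < b}.Nonempty) :
    sInf {b ∈ ks | a < b} ∈ {b ∈ ks | a < b} ∧ sInf {b ∈ ks | a < b} ∈ J := by
  set Sa := {b ∈ ks | a < b} with hSa
  have hbdd : BddBelow Sa := ⟨a, fun y hy => hy.2.le⟩
  set s := sInf Sa with hs
  obtain ⟨b₀, hb₀⟩ := hne
  have has : a ≤ s := le_csInf ⟨b₀, hb₀⟩ fun y hy => hy.2.le
  have hsb : s ≤ b₀ := csInf_le hbdd hb₀
  have hsJ : s ∈ J := hJ.out (hks.subset ha) (hks.subset hb₀.1) ⟨has, hsb⟩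
  refine ⟨?_, hsJ⟩
  by_contra hns
  apply hks.noCluster s hsJ
  rw [accPt_iff_nhds]
  intro U hU
  obtain ⟨ε, hε, hball⟩ := Metric.mem_nhds_iff.1 hU
  obtain ⟨y, hy, hyε⟩ := Real.lt_sInf_add_pos (⟨b₀, hb₀⟩ : Sa.Nonempty) hε
  have hsy : s ≤ y := csInf_le hbdd hy
  refine ⟨y, ⟨hball ?_, hy.1⟩, fun h => hns (h ▸ hy)⟩
  rw [Metric.mem_ball, Real.dist_eq, abs_of_nonneg (by linarith)]
  linarith

lemma pred_attained (hJ : J.OrdConnected) (hks : IsKnotSeq J ks) (ha : a ∈ ks)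
    (hne : {b ∈ ks | b < a}.Nonempty) :
    sSup {b ∈ ks | b < a} ∈ {b ∈ ks | b < a} ∧ sSup {b ∈ ks | b < a} ∈ J := by
  set Sb := {b ∈ ks | b < a} with hSb
  have hbdd : BddAbove Sb := ⟨a, fun y hy => hy.2.le⟩
  set s := sSup Sb with hs
  obtain ⟨b₀, hb₀⟩ := hne
  have has : s ≤ a := csSup_le ⟨b₀, hb₀⟩ fun y hy => hy.2.le
  have hsb : b₀ ≤ s := le_csSup hbdd hb₀
  have hsJ : s ∈ J := hJ.out (hks.subset hb₀.1) (hks.subset ha) ⟨hsb, has⟩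
  refine ⟨?_, hsJ⟩
  by_contra hns
  apply hks.noCluster s hsJ
  rw [accPt_iff_nhds]
  intro U hU
  obtain ⟨ε, hε, hball⟩ := Metric.mem_nhds_iff.1 hU
  obtain ⟨y, hy, hyε⟩ := Real.add_neg_lt_sSup (⟨b₀, hb₀⟩ : Sb.Nonempty) (neg_neg_iff_pos.2 hε)
  have hsy : y ≤ s := le_csSup hbdd hy
  refine ⟨y, ⟨hball ?_, hy.1⟩, fun h => hns (h ▸ hy)⟩
  rw [Metric.mem_ball, Real.dist_eq, abs_of_nonpos (by linarith)]
  linarith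

lemma exists_left_bound (hJ : J.OrdConnected) (hks : IsKnotSeq J ks) (ha : a ∈ ks) :
    ∃ l, l ∈ J ∧ l ≤ a ∧
      ∀ᵐ (x : ℝ) ∂(volume.restrict J), predE ks a ≤ (x : EReal) → l ≤ x := by
  by_cases hne : {b ∈ ks | b < a}.Nonempty
  · obtain ⟨hmem, hJmem⟩ := pred_attained hJ hks ha hne
    refine ⟨sSup {b ∈ ks | b < a}, hJmem, hmem.2.le, Eventually.of_forall fun x hx => ?_⟩
    have hcoe : ((sSup {b ∈ ks | b < a} : ℝ) : EReal) ≤ predE ks a :=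
      le_sSup (Set.mem_image_of_mem _ hmem)
    exact_mod_cast hcoe.trans hx
  · refine ⟨a, hks.subset ha, le_refl a, ?_⟩
    have hJm : MeasurableSet J := hJ.measurableSet
    filter_upwards [ae_restrict_mem hJm] with x hxJ _
    -- a is a lower bound of ks, hence of J via inf_eq
    have h1 : (a : EReal) ≤ sInf ((fun x : ℝ => (x : EReal)) '' ks) := by
      refine le_sInf ?_
      rintro y ⟨b, hb, rfl⟩
      have hab : a ≤ b := le_of_not_gt fun h => hne ⟨b, hb, h⟩
      exact EReal.coe_le_coe_iff.2 hab
    have h2 : sInf ((fun x : ℝ => (x : EReal)) '' J) ≤ (x : EReal) :=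
      sInf_le ⟨x, hxJ, rfl⟩
    have := h1.trans (hks.inf_eq ▸ h2)
    exact_mod_cast this

lemma exists_right_bound (hJ : J.OrdConnected) (hks : IsKnotSeq J ks) (ha : a ∈ ks) :
    ∃ r, r ∈ J ∧ a ≤ r ∧
      ∀ᵐ (x : ℝ) ∂(volume.restrict J), (x : EReal) ≤ succE ks a → x ≤ r := by
  by_cases hne : {b ∈ ks | a < b}.Nonempty
  · obtain ⟨hmem, hJmem⟩ := succ_attained hJ hks ha hne
    refine ⟨sInf {b ∈ ks | a < b}, hJmem, hmem.2.le, Eventually.of_forall fun x hx => ?_⟩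
    have hcoe : succE ks a ≤ ((sInf {b ∈ ks | a < b} : ℝ) : EReal) :=
      sInf_le (Set.mem_image_of_mem _ hmem)
    exact_mod_cast hx.trans hcoe
  · refine ⟨a, hks.subset ha, le_refl a, ?_⟩
    have hJm : MeasurableSet J := hJ.measurableSet
    filter_upwards [ae_restrict_mem hJm] with x hxJ _
    have h1 : sSup ((fun x : ℝ => (x : EReal)) '' ks) ≤ (a : EReal) := by
      refine sSup_le ?_
      rintro y ⟨b, hb, rfl⟩
      have hab : b ≤ a := le_of_not_gt fun h => hne ⟨b, hb, h⟩
      exact EReal.coe_le_coe_iff.2 hab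
    have h2 : (x : EReal) ≤ sSup ((fun x : ℝ => (x : EReal)) '' J) :=
      le_sSup ⟨x, hxJ, rfl⟩
    have := (hks.sup_eq ▸ h2).trans h1
    exact_mod_cast this

lemma exists_compact_bound (hJ : J.OrdConnected) (hks : IsKnotSeq J ks) (ha : a ∈ ks) :
    ∃ l r : ℝ, Set.Icc l r ⊆ J ∧
      ∀ᵐ x ∂(volume.restrict J), x ∈ IccPS ks a → x ∈ Set.Icc l r := by
  obtain ⟨l, hlJ, hla, hl⟩ := exists_left_bound hJ hks ha
  obtain ⟨r, hrJ, har, hr⟩ := exists_right_bound hJ hks ha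
  refine ⟨l, r, hJ.out hlJ hrJ, ?_⟩
  filter_upwards [hl, hr] with x h1 h2 hx
  exact ⟨h1 hx.1, h2 hx.2⟩

end KnotWavelet
namespace KnotWavelet

variable {J ks : Set ℝ} {a : ℝ}

lemma subset_SClos (Φ : Set (L2S J)) : Φ ⊆ (SClos J Φ : Set (L2S J)) := fun φ hφ =>
  Submodule.le_topologicalClosure _ (Submodule.subset_span hφ)

lemma isClosed_SClos (Φ : Set (L2S J)) : IsClosed ((SClos J Φ : Set (L2S J))) :=
  Submodule.isClosed_topologicalClosure _

lemma finiteDimensional_Vmid (hJ : J.OrdConnected) (hks : IsKnotSeq J ks)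
    {Φ : Set (L2S J)} (hΦ : OrthoCenteredBasis J ks Φ) (ha : a ∈ ks) :
    FiniteDimensional ℝ (Vmid J ks (SClos J Φ) a) := by
  obtain ⟨l, r, hlrJ, hae⟩ := exists_compact_bound hJ hks ha
  set K := Set.Icc l r with hK
  have hFfin : {φ ∈ Φ | ¬ ∀ᵐ x ∂(volume.restrict J), x ∈ K → φ x = 0}.Finite :=
    hΦ.1.1 K isCompact_Icc hlrJ
  set F := {φ ∈ Φ | ¬ ∀ᵐ x ∂(volume.restrict J), x ∈ K → φ x = 0} with hF
  set Wsp := Submodule.span ℝ F with hWsp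
  haveI : FiniteDimensional ℝ Wsp := FiniteDimensional.span_of_finite ℝ hFfin
  have hle : Vmid J ks (SClos J Φ) a ≤ Wsp := by
    intro f hf
    obtain ⟨hfV, hfsupp⟩ := (mem_suppSub.1 hf : f ∈ SClos J Φ ∧ SuppIn J f (IccPS ks a))
    have hperp : ∀ φ ∈ Φ, φ ∉ F → (inner ℝ f φ : ℝ) = 0 := by
      intro φ hφ hφF
      have hvan : ∀ᵐ x ∂(volume.restrict J), x ∈ K → φ x = 0 := by
        by_contra h
        exact hφF ⟨hφ, h⟩
      rw [MeasureTheory.L2.inner_def]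
      have h : (fun x => (inner ℝ (f x) (φ x) : ℝ)) =ᵐ[volume.restrict J] 0 := by
        filter_upwards [hfsupp, hvan, hae] with x h1 h2 h3
        by_cases hxK : x ∈ K
        · simp [h2 hxK]
        · simp [h1 fun hxI => hxK (h3 hxI)]
      rw [integral_congr_ae h]
      simp
    set g := f - projL Wsp f with hg
    have hprojmem : projL Wsp f ∈ Wsp := by
      have := projL_mem Wsp f
      rwa [(Submodule.closed_of_finiteDimensional Wsp).submodule_topologicalClosure_eq] at this
    have hgV : g ∈ SClos J Φ := by
      refine Submodule.sub_mem _ hfV ?_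
      have hWle : Wsp ≤ SClos J Φ := Submodule.span_le.2 fun ψ hψ => subset_SClos Φ hψ.1
      exact hWle hprojmem
    have hgperp : ∀ φ ∈ Φ, (inner ℝ g φ : ℝ) = 0 := by
      intro φ hφ
      by_cases hφF : φ ∈ F
      · rw [real_inner_comm]
        exact (Submodule.mem_orthogonal _ _).1 (sub_projL_mem_orthogonal Wsp f) φ
          (Submodule.subset_span hφF)
      · have h1 : (inner ℝ f φ : ℝ) = 0 := hperp φ hφ hφF
        have hWperp : Wsp ≤ (Submodule.span ℝ {φ})ᗮ := by
          refine Submodule.span_le.2 fun ψ hψ => ?_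
          show ψ ∈ (Submodule.span ℝ {φ})ᗮ
          rw [Submodule.mem_orthogonal]
          intro u hu
          obtain ⟨c, rfl⟩ := Submodule.mem_span_singleton.1 hu
          rw [real_inner_smul_left]
          have : (inner ℝ φ ψ : ℝ) = 0 :=
            hΦ.2 hφ hψ.1 (fun h => hφF (h ▸ hψ))
          rw [this, mul_zero]
        have h2 : (inner ℝ (projL Wsp f) φ : ℝ) = 0 := by
          rw [real_inner_comm]
          exact (Submodule.mem_orthogonal _ _).1 (hWperp hprojmem) φ
            (Submodule.subset_span rfl)
        rw [hg, inner_sub_left, h1, h2, sub_zero]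
    have hgzero : g = 0 := by
      have hNle : SClos J Φ ≤ (Submodule.span ℝ {g})ᗮ := by
        refine Submodule.topologicalClosure_minimal _ ?_ (Submodule.isClosed_orthogonal _)
        refine Submodule.span_le.2 fun φ hφ => ?_
        show φ ∈ (Submodule.span ℝ {g})ᗮ
        rw [Submodule.mem_orthogonal]
        intro u hu
        obtain ⟨c, rfl⟩ := Submodule.mem_span_singleton.1 hu
        rw [real_inner_smul_left, hgperp φ hφ, mul_zero]
      have := (Submodule.mem_orthogonal _ _).1 (hNle hgV) g (Submodule.subset_span rfl)
      rwa [inner_self_eq_zero] at this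
    have : f = projL Wsp f := by
      have := sub_eq_zero.1 hgzero
      exact this
    rw [this]
    exact hprojmem
  exact Submodule.finiteDimensional_of_le hle

end KnotWavelet
namespace KnotWavelet

attribute [local instance] t1space_aux t2space_aux

variable {J ks : Set ℝ} {a : ℝ} {V : Submodule ℝ (L2S J)}

lemma not_mem_both' (J : Set ℝ) (ks : Set ℝ) (a : ℝ) :
    ∀ᵐ x ∂(volume.restrict J), ¬(x ∈ IccS ks a ∧ x ∈ IccP ks a) := by
  filter_upwards [not_mem_both J ks a] with x hx h
  exact hx ⟨h.2, h.1⟩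

lemma isClosed_suppSub (hV : IsClosed (V : Set (L2S J))) {I : Set ℝ}
    (hI : MeasurableSet I) : IsClosed ((suppSub J V I : Set (L2S J))) := by
  rw [suppSub_eq_inf]
  rw [Submodule.coe_inf]
  exact hV.inter (isClosed_suppFull hI)

lemma suppSub_le (V : Submodule ℝ (L2S J)) (I : Set ℝ) : suppSub J V I ≤ V :=
  fun _ hf => hf.1

lemma suppSub_le_suppFull (V : Submodule ℝ (L2S J)) (I : Set ℝ) :
    suppSub J V I ≤ suppFull J I := fun _ hf => mem_suppFull.2 hf.2

lemma VbrevePred_le_suppFull (V : Submodule ℝ (L2S J)) :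
    VbrevePred J ks V a ≤ suppFull J (IccP ks a) := by
  unfold VbrevePred
  split_ifs
  · exact suppSub_le_suppFull V _
  · exact bot_le

lemma VbrevePred_le (V : Submodule ℝ (L2S J)) : VbrevePred J ks V a ≤ V := by
  unfold VbrevePred
  split_ifs
  · exact suppSub_le V _
  · exact bot_le

lemma isClosed_VbrevePred (hV : IsClosed (V : Set (L2S J))) :
    IsClosed ((VbrevePred J ks V a : Set (L2S J))) := by
  unfold VbrevePred
  split_ifs
  · exact isClosed_suppSub hV (measurableSet_IccP ks a)
  · rw [Submodule.bot_coe]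
    exact isClosed_singleton

lemma isClosed_Vbreve (hV : IsClosed (V : Set (L2S J))) :
    IsClosed ((Vbreve J ks V a : Set (L2S J))) :=
  isClosed_suppSub hV (measurableSet_IccS ks a)

lemma isClosed_Vmid (hV : IsClosed (V : Set (L2S J))) :
    IsClosed ((Vmid J ks V a : Set (L2S J))) :=
  isClosed_suppSub hV (measurableSet_IccPS ks a)

lemma brsup_le_Vmid (V : Submodule ℝ (L2S J)) :
    VbrevePred J ks V a ⊔ Vbreve J ks V a ≤ Vmid J ks V a := by
  refine sup_le (fun f hf => ?_) (fun f hf => ?_)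
  · exact ⟨VbrevePred_le V hf, suppIn_mono IccP_subset_IccPS
      (mem_suppFull.1 (VbrevePred_le_suppFull V hf))⟩
  · exact ⟨hf.1, suppIn_mono IccS_subset_IccPS hf.2⟩

lemma Vbar_le_Vmid (hV : IsClosed (V : Set (L2S J))) :
    Vbar J ks V a ≤ Vmid J ks V a := by
  rintro x hx
  obtain ⟨f, hf, rfl⟩ := Submodule.mem_map.1 hx
  have h1 : projL (VbrevePred J ks V a ⊔ Vbreve J ks V a) f ∈ Vmid J ks V a := by
    have := projL_mem (VbrevePred J ks V a ⊔ Vbreve J ks V a) f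
    exact Submodule.topologicalClosure_minimal _ (brsup_le_Vmid V) (isClosed_Vmid hV) this
  simpa using Submodule.sub_mem _ hf h1

lemma Vbar_perp (V : Submodule ℝ (L2S J)) :
    Vbar J ks V a ≤ (VbrevePred J ks V a ⊔ Vbreve J ks V a)ᗮ := by
  rintro x hx
  obtain ⟨f, hf, rfl⟩ := Submodule.mem_map.1 hx
  simpa using sub_projL_mem_orthogonal (VbrevePred J ks V a ⊔ Vbreve J ks V a) f

lemma Vbar_le_suppFull (hV : IsClosed (V : Set (L2S J))) :
    Vbar J ks V a ≤ suppFull J (IccPS ks a) :=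
  fun f hf => mem_suppFull.2 (Vbar_le_Vmid hV hf).2

lemma Vbar_le (hV : IsClosed (V : Set (L2S J))) : Vbar J ks V a ≤ V :=
  fun f hf => (Vbar_le_Vmid hV hf).1

end KnotWavelet
namespace KnotWavelet

attribute [local instance] t1space_aux t2space_aux

section Hilbert

variable {H : Type*} [NormedAddCommGroup H] [InnerProductSpace ℝ H] [CompleteSpace H]

lemma projL_mem_closed {K M : Submodule ℝ H} (hKM : K ≤ M) (hM : IsClosed (M : Set H))
    (f : H) : projL K f ∈ M :=
  Submodule.topologicalClosure_minimal K hKM hM (projL_mem K f)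

lemma inner_projL_right_eq_zero {K : Submodule ℝ H} {g : H} (hg : g ∈ Kᗮ) (f : H) :
    (inner ℝ g (projL K f) : ℝ) = 0 := by
  rw [← orthogonal_closure] at hg
  rw [real_inner_comm]
  exact (Submodule.mem_orthogonal _ _).1 hg _ (projL_mem K f)

end Hilbert

variable {J ks : Set ℝ} {a : ℝ}

lemma Vbreve_perp_VbrevePred (V W : Submodule ℝ (L2S J)) :
    ∀ g ∈ VbrevePred J ks V a, ∀ h ∈ Vbreve J ks W a, (inner ℝ g h : ℝ) = 0 :=
  fun g hg h hh =>
    inner_eq_zero_of_suppIn (mem_suppFull.1 (VbrevePred_le_suppFull V hg))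
      (mem_suppFull.1 (suppSub_le_suppFull W _ hh)) (not_mem_both J ks a)

/-- The key local decomposition: for `f ∈ V̄⁰ₐ`, the projections onto `V̆¹ₐ₋` and `V̆¹ₐ`
sum to `f − P_{V̄¹ₐ} f`. -/
lemma key_decomp {V₀ V₁ : Submodule ℝ (L2S J)}
    (h0c : IsClosed (V₀ : Set (L2S J))) (h1c : IsClosed (V₁ : Set (L2S J)))
    (hle : V₀ ≤ V₁) {f : L2S J} (hf : f ∈ Vbar J ks V₀ a) :
    projL (VbrevePred J ks V₁ a) f + projL (Vbreve J ks V₁ a) f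
      = f - projL (Vbar J ks V₁ a) f := by
  set Pm := VbrevePred J ks V₁ a with hPm
  set Br := Vbreve J ks V₁ a with hBr
  set B := Pm ⊔ Br with hB
  set u := projL Pm f with hu
  set w := projL Br f with hw
  have hPmc : IsClosed ((Pm : Set (L2S J))) := isClosed_VbrevePred h1c
  have hBrc : IsClosed ((Br : Set (L2S J))) := isClosed_Vbreve h1c
  have hsup : projL B f = u + w :=
    projL_sup_eq hPmc hBrc (Vbreve_perp_VbrevePred V₁ V₁) f
  have hfmid : f ∈ Vmid J ks V₁ a :=
    ⟨hle (Vbar_le h0c hf), (Vbar_le_Vmid h0c hf).2⟩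
  have hv : f - projL B f ∈ Vbar J ks V₁ a := by
    refine Submodule.mem_map.2 ⟨f, hfmid, ?_⟩
    simp [oneSubProjSub]
    rfl
  have hproj : projL (Vbar J ks V₁ a) f = f - projL B f := by
    apply projL_eq_of_mem_of_orthogonal (Submodule.le_topologicalClosure _ hv)
    have heq : f - (f - projL B f) = projL B f := by abel
    rw [heq]
    rw [Submodule.mem_orthogonal]
    intro g hg
    have hgB : g ∈ Bᗮ := Vbar_perp V₁ hg
    exact inner_projL_right_eq_zero hgB f
  rw [hproj, sub_sub_cancel, hsup]

lemma suppIn_projL_VbrevePred (V : Submodule ℝ (L2S J)) (f : L2S J) :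
    SuppIn J (projL (VbrevePred J ks V a) f) (IccP ks a) :=
  mem_suppFull.1 (projL_mem_closed (VbrevePred_le_suppFull V)
    (isClosed_suppFull (measurableSet_IccP ks a)) f)

lemma suppIn_projL_Vbreve (V : Submodule ℝ (L2S J)) (f : L2S J) :
    SuppIn J (projL (Vbreve J ks V a) f) (IccS ks a) :=
  mem_suppFull.1 (projL_mem_closed (suppSub_le_suppFull V _)
    (isClosed_suppFull (measurableSet_IccS ks a)) f)

end KnotWavelet
namespace KnotWavelet

attribute [local instance] t1space_aux t2space_aux

variable {J ks : Set ℝ} {a : ℝ}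

lemma mem_Aminus {V₀ V₁ : Submodule ℝ (L2S J)} {x : L2S J} :
    x ∈ Aminus J ks V₀ V₁ a ↔
      ∃ f ∈ Vbar J ks V₀ a, projL (VbrevePred J ks V₁ a) f = x :=
  Submodule.mem_map

lemma mem_Aplus {V₀ V₁ : Submodule ℝ (L2S J)} {x : L2S J} :
    x ∈ Aplus J ks V₀ V₁ a ↔
      ∃ f ∈ Vbar J ks V₀ a, projL (Vbreve J ks V₁ a) f = x :=
  Submodule.mem_map

lemma mem_Tsp {V₀ V₁ : Submodule ℝ (L2S J)} {x : L2S J} :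
    x ∈ Tsp J ks V₀ V₁ a ↔
      ∃ f ∈ Vbar J ks V₀ a, f - projL (Vbar J ks V₁ a) f = x :=
  Submodule.mem_map

lemma mem_Ssp {V₀ V₁ : Submodule ℝ (L2S J)} {x : L2S J} :
    x ∈ Ssp J ks V₀ V₁ a ↔
      ∃ u ∈ Usp J ks V₀ V₁ a, indL2 J (IccS ks a) u - indL2 J (IccP ks a) u = x :=
  Submodule.mem_map

end KnotWavelet

open KnotWavelet in
theorem Aminus_oplus_Aplus_eq_S_add_T'
    (J ks : Set ℝ) (hJ : J.OrdConnected) (hks : IsKnotSeq J ks)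
    (Φ₀ Φ₁ : Set (L2S J))
    (h₀ : OrthoCenteredBasis J ks Φ₀) (h₁ : OrthoCenteredBasis J ks Φ₁)
    (V₀ V₁ : Submodule ℝ (L2S J))
    (hV₀ : V₀ = SClos J Φ₀) (hV₁ : V₁ = SClos J Φ₁) (hle : V₀ ≤ V₁) :
    ∀ a ∈ ks,
      Disjoint (Aminus J ks V₀ V₁ a) (Aplus J ks V₀ V₁ a) ∧
      Aminus J ks V₀ V₁ a ⊔ Aplus J ks V₀ V₁ a =
        Ssp J ks V₀ V₁ a ⊔ Tsp J ks V₀ V₁ a := by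
  haveI : T1Space (L2S J) := t1space_aux J
  haveI : T2Space (L2S J) := t2space_aux J
  intro a ha
  have h0c : IsClosed ((V₀ : Set (L2S J))) := hV₀ ▸ isClosed_SClos Φ₀
  have h1c : IsClosed ((V₁ : Set (L2S J))) := hV₁ ▸ isClosed_SClos Φ₁
  haveI fd0 : FiniteDimensional ℝ (Vmid J ks V₀ a) :=
    hV₀ ▸ finiteDimensional_Vmid hJ hks h₀ ha
  haveI fdbar : FiniteDimensional ℝ (Vbar J ks V₀ a) := by
    unfold Vbar oneSubProjSub; infer_instance
  haveI fdT : FiniteDimensional ℝ (Tsp J ks V₀ V₁ a) := by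
    unfold Tsp oneSubProjSub; infer_instance
  haveI fdTm : FiniteDimensional ℝ (Tminus J ks V₀ V₁ a) :=
    Submodule.finiteDimensional_of_le (suppSub_le _ _)
  haveI fdTp : FiniteDimensional ℝ (Tplus J ks V₀ V₁ a) :=
    Submodule.finiteDimensional_of_le (suppSub_le _ _)
  -- D maps elements of T into S ⊔ T
  have hdec : ∀ t ∈ Tsp J ks V₀ V₁ a,
      indL2 J (IccS ks a) t - indL2 J (IccP ks a) t ∈
        Ssp J ks V₀ V₁ a ⊔ Tsp J ks V₀ V₁ a := by
    intro t ht
    have hTmc : IsClosed ((Tminus J ks V₀ V₁ a : Set (L2S J))) :=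
      Submodule.closed_of_finiteDimensional _
    have hTpc : IsClosed ((Tplus J ks V₀ V₁ a : Set (L2S J))) :=
      Submodule.closed_of_finiteDimensional _
    have hperp : ∀ g ∈ Tminus J ks V₀ V₁ a, ∀ h ∈ Tplus J ks V₀ V₁ a,
        (inner ℝ g h : ℝ) = 0 := fun g hg h hh =>
      inner_eq_zero_of_suppIn hg.2 hh.2 (not_mem_both J ks a)
    set tm := projL (Tminus J ks V₀ V₁ a) t with htmdef
    set tp := projL (Tplus J ks V₀ V₁ a) t with htpdef
    have htm : tm ∈ Tminus J ks V₀ V₁ a := by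
      have := projL_mem (Tminus J ks V₀ V₁ a) t
      rwa [hTmc.submodule_topologicalClosure_eq] at this
    have htp : tp ∈ Tplus J ks V₀ V₁ a := by
      have := projL_mem (Tplus J ks V₀ V₁ a) t
      rwa [hTpc.submodule_topologicalClosure_eq] at this
    have hsup : projL (Tminus J ks V₀ V₁ a ⊔ Tplus J ks V₀ V₁ a) t = tm + tp :=
      projL_sup_eq hTmc hTpc hperp t
    have huu : t - tm - tp ∈ Usp J ks V₀ V₁ a := by
      constructor
      · exact Submodule.sub_mem _ (Submodule.sub_mem _ ht (suppSub_le _ _ htm))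
          (suppSub_le _ _ htp)
      · have heq : t - tm - tp =
            t - projL (Tminus J ks V₀ V₁ a ⊔ Tplus J ks V₀ V₁ a) t := by
          rw [hsup]; abel
        rw [heq]
        exact sub_projL_mem_orthogonal _ t
    -- compute D on the pieces
    have hDs : indL2 J (IccS ks a) t =
        indL2 J (IccS ks a) (t - tm - tp) + tp := by
      have e0 : t = (t - tm - tp) + tm + tp := by abel
      have e1 : indL2 J (IccS ks a) tm = 0 :=
        indL2_eq_zero_of_suppIn (measurableSet_IccS ks a) htm.2 (not_mem_both' J ks a)
      have e2 : indL2 J (IccS ks a) tp = tp :=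
        indL2_of_suppIn (measurableSet_IccS ks a) htp.2
      calc indL2 J (IccS ks a) t
          = (indLM J (IccS ks a)) ((t - tm - tp) + tm + tp) := by rw [← e0]; rfl
        _ = (indLM J (IccS ks a)) (t - tm - tp) + (indLM J (IccS ks a)) tm
            + (indLM J (IccS ks a)) tp := by rw [map_add, map_add]
        _ = indL2 J (IccS ks a) (t - tm - tp) + tp := by
            show indL2 J (IccS ks a) (t - tm - tp) + indL2 J (IccS ks a) tm
              + indL2 J (IccS ks a) tp = _
            rw [e1, e2, add_zero]
    have hDp : indL2 J (IccP ks a) t =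
        indL2 J (IccP ks a) (t - tm - tp) + tm := by
      have e0 : t = (t - tm - tp) + tm + tp := by abel
      have e1 : indL2 J (IccP ks a) tp = 0 :=
        indL2_eq_zero_of_suppIn (measurableSet_IccP ks a) htp.2 (not_mem_both J ks a)
      have e2 : indL2 J (IccP ks a) tm = tm :=
        indL2_of_suppIn (measurableSet_IccP ks a) htm.2
      calc indL2 J (IccP ks a) t
          = (indLM J (IccP ks a)) ((t - tm - tp) + tm + tp) := by rw [← e0]; rfl
        _ = (indLM J (IccP ks a)) (t - tm - tp) + (indLM J (IccP ks a)) tm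
            + (indLM J (IccP ks a)) tp := by rw [map_add, map_add]
        _ = indL2 J (IccP ks a) (t - tm - tp) + tm := by
            show indL2 J (IccP ks a) (t - tm - tp) + indL2 J (IccP ks a) tm
              + indL2 J (IccP ks a) tp = _
            rw [e1, e2, add_zero]
    have hDmem : indL2 J (IccS ks a) (t - tm - tp) - indL2 J (IccP ks a) (t - tm - tp)
        ∈ Ssp J ks V₀ V₁ a := mem_Ssp.2 ⟨t - tm - tp, huu, rfl⟩
    have hfinal : indL2 J (IccS ks a) t - indL2 J (IccP ks a) t =
        (indL2 J (IccS ks a) (t - tm - tp) - indL2 J (IccP ks a) (t - tm - tp))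
          + tp - tm := by
      rw [hDs, hDp]; abel
    rw [hfinal]
    exact Submodule.sub_mem _
      (Submodule.add_mem _ (Submodule.mem_sup_left hDmem)
        (Submodule.mem_sup_right (suppSub_le _ _ htp)))
      (Submodule.mem_sup_right (suppSub_le _ _ htm))
  -- the core computation
  have hcore : ∀ f ∈ Vbar J ks V₀ a,
      projL (VbrevePred J ks V₁ a) f + projL (Vbreve J ks V₁ a) f
        = f - projL (Vbar J ks V₁ a) f := fun f hf => key_decomp h0c h1c hle hf
  have hDt : ∀ f ∈ Vbar J ks V₀ a,
      indL2 J (IccS ks a) (f - projL (Vbar J ks V₁ a) f)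
          - indL2 J (IccP ks a) (f - projL (Vbar J ks V₁ a) f)
        = projL (Vbreve J ks V₁ a) f - projL (VbrevePred J ks V₁ a) f := by
    intro f hf
    set u := projL (VbrevePred J ks V₁ a) f with hu
    set w := projL (Vbreve J ks V₁ a) f with hw
    have ht : f - projL (Vbar J ks V₁ a) f = u + w := (hcore f hf).symm
    rw [ht]
    have e1 : indL2 J (IccS ks a) (u + w) = w := by
      have h1 : indL2 J (IccS ks a) u = 0 :=
        indL2_eq_zero_of_suppIn (measurableSet_IccS ks a)
          (suppIn_projL_VbrevePred V₁ f) (not_mem_both' J ks a)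
      have h2 : indL2 J (IccS ks a) w = w :=
        indL2_of_suppIn (measurableSet_IccS ks a) (suppIn_projL_Vbreve V₁ f)
      calc indL2 J (IccS ks a) (u + w)
          = (indLM J (IccS ks a)) u + (indLM J (IccS ks a)) w := (indLM J (IccS ks a)).map_add u w
        _ = w := by
            show indL2 J (IccS ks a) u + indL2 J (IccS ks a) w = w
            rw [h1, h2, zero_add]
    have e2 : indL2 J (IccP ks a) (u + w) = u := by
      have h1 : indL2 J (IccP ks a) w = 0 :=
        indL2_eq_zero_of_suppIn (measurableSet_IccP ks a)
          (suppIn_projL_Vbreve V₁ f) (not_mem_both J ks a)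
      have h2 : indL2 J (IccP ks a) u = u :=
        indL2_of_suppIn (measurableSet_IccP ks a) (suppIn_projL_VbrevePred V₁ f)
      calc indL2 J (IccP ks a) (u + w)
          = (indLM J (IccP ks a)) u + (indLM J (IccP ks a)) w := (indLM J (IccP ks a)).map_add u w
        _ = u := by
            show indL2 J (IccP ks a) u + indL2 J (IccP ks a) w = u
            rw [h1, h2, add_zero]
    rw [e1, e2]
  constructor
  · -- disjointness
    rw [Submodule.disjoint_def]
    intro x hxm hxp
    obtain ⟨f, hf, rfl⟩ := mem_Aminus.1 hxm
    have h1 : SuppIn J (projL (VbrevePred J ks V₁ a) f) (IccP ks a) :=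
      suppIn_projL_VbrevePred V₁ f
    obtain ⟨g, hg, heq⟩ := mem_Aplus.1 hxp
    have h2 : SuppIn J (projL (VbrevePred J ks V₁ a) f) (IccS ks a) := by
      rw [← heq]
      exact suppIn_projL_Vbreve V₁ g
    rw [Lp.eq_zero_iff_ae_eq_zero]
    filter_upwards [h1, h2, ae_ne_pt J a] with y hy1 hy2 hy3
    by_cases hyP : y ∈ IccP ks a
    · have hyS : y ∉ IccS ks a := fun hS => hy3 (IccP_inter_IccS ⟨hyP, hS⟩)
      simpa using hy2 hyS
    · simpa using hy1 hyP
  · refine le_antisymm (sup_le ?_ ?_) (sup_le ?_ ?_)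
    · -- Aminus ≤ S ⊔ T
      rintro x hx
      obtain ⟨f, hf, rfl⟩ := mem_Aminus.1 hx
      set u := projL (VbrevePred J ks V₁ a) f with hu
      set w := projL (Vbreve J ks V₁ a) f with hw
      set t := f - projL (Vbar J ks V₁ a) f with ht
      have htT : t ∈ Tsp J ks V₀ V₁ a := mem_Tsp.2 ⟨f, hf, rfl⟩
      have hDmem := hdec t htT
      have hDval : indL2 J (IccS ks a) t - indL2 J (IccP ks a) t = w - u := hDt f hf
      have ht2 : t = u + w := (hcore f hf).symm
      have hueq : u = (2⁻¹ : ℝ) • (t - (w - u)) := by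
        rw [ht2]
        have : u + w - (w - u) = (2 : ℝ) • u := by
          rw [two_smul]; abel
        rw [this, smul_smul]
        norm_num
      rw [hueq]
      exact Submodule.smul_mem _ _ (Submodule.sub_mem _ (Submodule.mem_sup_right htT)
        (hDval ▸ hDmem))
    · -- Aplus ≤ S ⊔ T
      rintro x hx
      obtain ⟨f, hf, rfl⟩ := mem_Aplus.1 hx
      set u := projL (VbrevePred J ks V₁ a) f with hu
      set w := projL (Vbreve J ks V₁ a) f with hw
      set t := f - projL (Vbar J ks V₁ a) f with ht
      have htT : t ∈ Tsp J ks V₀ V₁ a := mem_Tsp.2 ⟨f, hf, rfl⟩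
      have hDmem := hdec t htT
      have hDval : indL2 J (IccS ks a) t - indL2 J (IccP ks a) t = w - u := hDt f hf
      have ht2 : t = u + w := (hcore f hf).symm
      have hweq : w = (2⁻¹ : ℝ) • (t + (w - u)) := by
        rw [ht2]
        have : u + w + (w - u) = (2 : ℝ) • w := by
          rw [two_smul]; abel
        rw [this, smul_smul]
        norm_num
      rw [hweq]
      exact Submodule.smul_mem _ _ (Submodule.add_mem _ (Submodule.mem_sup_right htT)
        (hDval ▸ hDmem))
    · -- Ssp ≤ Aminus ⊔ Aplus
      rintro x hx
      obtain ⟨uu, huu, rfl⟩ := mem_Ssp.1 hx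
      obtain ⟨f, hf, rfl⟩ := mem_Tsp.1 (huu.1 : uu ∈ Tsp J ks V₀ V₁ a)
      have hDval := hDt f hf
      rw [hDval]
      exact Submodule.sub_mem _
        (Submodule.mem_sup_right (mem_Aplus.2 ⟨f, hf, rfl⟩))
        (Submodule.mem_sup_left (mem_Aminus.2 ⟨f, hf, rfl⟩))
    · -- Tsp ≤ Aminus ⊔ Aplus
      rintro x hx
      obtain ⟨f, hf, rfl⟩ := mem_Tsp.1 hx
      rw [← hcore f hf]
      exact Submodule.add_mem _
        (Submodule.mem_sup_left (mem_Aminus.2 ⟨f, hf, rfl⟩))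
        (Submodule.mem_sup_right (mem_Aplus.2 ⟨f, hf, rfl⟩))
open KnotWavelet in
theorem Aminus_oplus_Aplus_eq_S_add_T
    (J ks : Set ℝ) (hJ : J.OrdConnected) (hks : IsKnotSeq J ks)
    (Φ₀ Φ₁ : Set (L2S J))
    (h₀ : OrthoCenteredBasis J ks Φ₀) (h₁ : OrthoCenteredBasis J ks Φ₁)
    (V₀ V₁ : Submodule ℝ (L2S J))
    (hV₀ : V₀ = SClos J Φ₀) (hV₁ : V₁ = SClos J Φ₁) (hle : V₀ ≤ V₁) :
    ∀ a ∈ ks,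
      Disjoint (Aminus J ks V₀ V₁ a) (Aplus J ks V₀ V₁ a) ∧
      Aminus J ks V₀ V₁ a ⊔ Aplus J ks V₀ V₁ a =
        Ssp J ks V₀ V₁ a ⊔ Tsp J ks V₀ V₁ a :=
  Aminus_oplus_Aplus_eq_S_add_T' J ks hJ hks Φ₀ Φ₁ h₀ h₁ V₀ V₁ hV₀ hV₁ hle
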